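/- Let q be an odd prime power with q ≡ 3 (mod 4), let m be a positive integer coprime to q, let ℓ be even, and let R = F_q[Y]/(Y^m − 1). Let C_0 ⊆ R^{2ℓ} be a Hermitian self-dual linear code over R generated as an R-module by vectors r_1, …, r_k. Let α, β ∈ R satisfy α·conj(α) + β·conj(β) = −1 and α·conj(β) = conj(α)·β. Let x_1, x_2 ∈ R^{2ℓ} satisfy ⟨x_1, x_2⟩ = 0 and ⟨x_i, x_i⟩ = −1 for i = 1, 2. For 1 ≤ i ≤ k set s_i = −⟨r_i, x_1⟩, t_i = −⟨r_i, x_2⟩, and let y_i = (s_i, t_i, α·s_i + β·t_i, β·s_i − α·t_i) ∈ R^4. Then the R-submodule C of R^{2ℓ+4} generated by (1, 0, 0, 0, x_1), (0, 1, 0, 0, x_2), and the vectors (y_i, r_i) for 1 ≤ i ≤ k is a Hermitian self-dual linear code over R of length 2ℓ+4. -/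

import Mathlib

open Polynomial

noncomputable section

/-- The ring `R = F_q[Y]/(Y^m − 1)`. -/
abbrev Rq (F : Type) [Field F] (m : ℕ) := AdjoinRoot ((X : F[X]) ^ m - 1)

lemma root_pow_eq_one (F : Type) [Field F] (m : ℕ) :
    (AdjoinRoot.root ((X : F[X]) ^ m - 1)) ^ m = 1 := by
  have h : (aeval (AdjoinRoot.root ((X : F[X]) ^ m - 1)) ((X : F[X]) ^ m - 1)) = 0 := by
    rw [AdjoinRoot.aeval_eq, AdjoinRoot.mk_self]
  simp only [map_sub, map_pow, aeval_X, map_one, sub_eq_zero] at h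
  exact h

/-- Conjugation on `R`: the `F`-algebra map determined by `Y ↦ Y^{m−1} (= Y⁻¹)`. -/
noncomputable def conjR (F : Type) [Field F] (m : ℕ) : Rq F m →ₐ[F] Rq F m :=
  AdjoinRoot.liftAlgHom _ (Algebra.ofId F _) ((AdjoinRoot.root ((X : F[X]) ^ m - 1)) ^ (m - 1)) (by
    change aeval ((AdjoinRoot.root ((X : F[X]) ^ m - 1)) ^ (m - 1)) ((X : F[X]) ^ m - 1) = 0
    simp only [map_sub, map_pow, aeval_X, map_one, sub_eq_zero, ← pow_mul]
    rw [mul_comm, pow_mul, root_pow_eq_one, one_pow])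

/-- The Hermitian inner product `⟨x,y⟩ = Σ_j x_j ⬝ conj(y_j)` on `R^n`. -/
def herm (F : Type) [Field F] (m : ℕ) {n : ℕ} (x y : Fin n → Rq F m) : Rq F m :=
  ∑ j, x j * conjR F m (y j)

/-- A linear code `C ⊆ R^n` is Hermitian self-dual if `C = C^⊥`, i.e. membership in `C`
coincides with orthogonality to all of `C`. -/
def IsHermSelfDual (F : Type) [Field F] (m : ℕ) {n : ℕ}
    (C : Submodule (Rq F m) (Fin n → Rq F m)) : Prop :=
  ∀ y, y ∈ C ↔ ∀ x ∈ C, herm F m x y = 0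

-- helpers
variable {F : Type} [Field F] {m : ℕ}

lemma conjR_conjR (hm : 0 < m) (x : Rq F m) : conjR F m (conjR F m x) = x := by
  have key : (conjR F m).comp (conjR F m) = AlgHom.id F (Rq F m) := by
    apply AdjoinRoot.algHom_ext
    set ρ := AdjoinRoot.root ((X : F[X]) ^ m - 1) with hρ
    have hru : ρ * ρ ^ (m - 1) = 1 := by
      rw [← pow_succ', Nat.sub_add_cancel hm, root_pow_eq_one]
    have hconj_root : conjR F m ρ = ρ ^ (m - 1) := AdjoinRoot.liftAlgHom_root ..
    have h2 : (ρ ^ (m - 1)) ^ (m - 1) * ρ ^ (m - 1) = 1 := by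
      rw [← pow_mul, ← pow_add]
      have : (m - 1) * (m - 1) + (m - 1) = (m - 1) * m := by
        calc (m - 1) * (m - 1) + (m - 1) = (m - 1) * ((m - 1) + 1) := by ring
          _ = (m - 1) * m := by rw [Nat.sub_add_cancel hm]
      rw [this, mul_comm, pow_mul, root_pow_eq_one, one_pow]
    simp only [AlgHom.comp_apply, AlgHom.id_apply, hconj_root, map_pow]
    calc (ρ ^ (m-1)) ^ (m-1) = (ρ ^ (m-1)) ^ (m-1) * (ρ ^ (m-1) * ρ) := by
          rw [mul_comm (ρ ^ (m-1)) ρ, hru, mul_one]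
      _ = ((ρ ^ (m-1)) ^ (m-1) * ρ ^ (m-1)) * ρ := by ring
      _ = ρ := by rw [h2, one_mul]
  calc conjR F m (conjR F m x) = ((conjR F m).comp (conjR F m)) x := rfl
    _ = x := by rw [key]; rfl

variable {n : ℕ}

lemma herm_add_left (x x' y : Fin n → Rq F m) :
    herm F m (x + x') y = herm F m x y + herm F m x' y := by
  simp [herm, add_mul, Finset.sum_add_distrib]

lemma herm_smul_left (z : Rq F m) (x y : Fin n → Rq F m) :
    herm F m (z • x) y = z * herm F m x y := by
  simp [herm, Finset.mul_sum, mul_assoc]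

lemma herm_sub_right (x y y' : Fin n → Rq F m) :
    herm F m x (y - y') = herm F m x y - herm F m x y' := by
  simp [herm, mul_sub, Finset.sum_sub_distrib]

lemma herm_add_right (x y y' : Fin n → Rq F m) :
    herm F m x (y + y') = herm F m x y + herm F m x y' := by
  simp [herm, mul_add, Finset.sum_add_distrib]

lemma herm_smul_right (z : Rq F m) (x y : Fin n → Rq F m) :
    herm F m x (z • y) = conjR F m z * herm F m x y := by
  rw [herm, herm, Finset.mul_sum]
  exact Finset.sum_congr rfl fun j _ => by
    simp only [Pi.smul_apply, smul_eq_mul, map_mul]; ring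

lemma conj_herm (hm : 0 < m) (x y : Fin n → Rq F m) :
    conjR F m (herm F m x y) = herm F m y x := by
  rw [herm, herm, map_sum]
  exact Finset.sum_congr rfl fun j _ => by
    rw [map_mul, conjR_conjR hm, mul_comm]

lemma herm_append {n₁ n₂ : ℕ} (u v : Fin n₁ → Rq F m) (x y : Fin n₂ → Rq F m) :
    herm F m (Fin.append u x) (Fin.append v y) = herm F m u v + herm F m x y := by
  simp [herm, Fin.sum_univ_add, Fin.append_left, Fin.append_right]

lemma herm_append_left {n₁ n₂ : ℕ} (u : Fin n₁ → Rq F m) (x : Fin n₂ → Rq F m)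
    (v : Fin (n₁ + n₂) → Rq F m) :
    herm F m (Fin.append u x) v =
      herm F m u (fun j => v (Fin.castAdd n₂ j)) + herm F m x (fun j => v (Fin.natAdd n₁ j)) := by
  conv_lhs => rw [← Fin.append_castAdd_natAdd (f := v)]
  exact herm_append _ _ _ _

lemma herm_sum_left {ι : Type} [Fintype ι] (c : ι → Rq F m) (f : ι → Fin n → Rq F m)
    (y : Fin n → Rq F m) :
    herm F m (∑ i, c i • f i) y = ∑ i, c i * herm F m (f i) y := by
  simp only [herm, Finset.sum_apply, Pi.smul_apply, smul_eq_mul, Finset.sum_mul, Finset.mul_sum]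
  rw [Finset.sum_comm]
  exact Finset.sum_congr rfl fun i _ => Finset.sum_congr rfl fun j _ => by ring

lemma herm_vec4 (a b c d : Rq F m) (u : Fin 4 → Rq F m) :
    herm F m ![a,b,c,d] u =
      a * conjR F m (u 0) + b * conjR F m (u 1) + c * conjR F m (u 2) + d * conjR F m (u 3) := by
  simp [herm, Fin.sum_univ_four]

def dualSM (x : Fin n → Rq F m) : Submodule (Rq F m) (Fin n → Rq F m) where
  carrier := {y | herm F m x y = 0}
  add_mem' := by
    intro y y' hy hy'
    simp only [Set.mem_setOf_eq] at *
    rw [herm_add_right, hy, hy', add_zero]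
  zero_mem' := by
    simp only [Set.mem_setOf_eq, herm]
    simp
  smul_mem' := by
    intro z y hy
    simp only [Set.mem_setOf_eq] at *
    rw [herm_smul_right, hy, mul_zero]

lemma mem_dualSM {x y : Fin n → Rq F m} : y ∈ dualSM x ↔ herm F m x y = 0 := Iff.rfl

def hermL (y : Fin n → Rq F m) : (Fin n → Rq F m) →ₗ[Rq F m] Rq F m where
  toFun x := herm F m x y
  map_add' x x' := herm_add_left x x' y
  map_smul' z x := herm_smul_left z x y

-- additional append helpers
lemma append_add {n₁ n₂ : ℕ} (u v : Fin n₁ → Rq F m) (x y : Fin n₂ → Rq F m) :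
    Fin.append u x + Fin.append v y = Fin.append (u + v) (x + y) := by
  funext j
  refine Fin.addCases (fun i => ?_) (fun i => ?_) j <;>
    simp [Fin.append_left, Fin.append_right]

lemma smul_append {n₁ n₂ : ℕ} (z : Rq F m) (u : Fin n₁ → Rq F m) (x : Fin n₂ → Rq F m) :
    z • Fin.append u x = Fin.append (z • u) (z • x) := by
  funext j
  refine Fin.addCases (fun i => ?_) (fun i => ?_) j <;>
    simp [Fin.append_left, Fin.append_right]

lemma sum_append {ι : Type} [Fintype ι] {n₁ n₂ : ℕ} (u : ι → Fin n₁ → Rq F m)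
    (x : ι → Fin n₂ → Rq F m) :
    ∑ i, Fin.append (u i) (x i) = Fin.append (∑ i, u i) (∑ i, x i) := by
  funext j
  refine Fin.addCases (fun i => ?_) (fun i => ?_) j <;>
    simp [Fin.append_left, Fin.append_right, Finset.sum_apply]

lemma herm_zero_left (y : Fin n → Rq F m) : herm F m 0 y = 0 := by simp [herm]

/-- Building-up construction, `q ≡ 3 (mod 4)` case. -/
theorem statement3 (F : Type) [Field F] [Fintype F]
    (hq : Fintype.card F % 4 = 3)
    (m : ℕ) (hm : 0 < m) (hcop : Nat.Coprime m (Fintype.card F))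
    (ℓ : ℕ) (hℓ : Even ℓ) (k : ℕ) (r : Fin k → (Fin (2 * ℓ) → Rq F m))
    (C₀ : Submodule (Rq F m) (Fin (2 * ℓ) → Rq F m))
    (hC₀span : C₀ = Submodule.span (Rq F m) (Set.range r))
    (hC₀sd : IsHermSelfDual F m C₀)
    (α β : Rq F m)
    (hαβ : α * conjR F m α + β * conjR F m β = -1)
    (hαβ' : α * conjR F m β = conjR F m α * β)
    (x₁ x₂ : Fin (2 * ℓ) → Rq F m)
    (hx₁₂ : herm F m x₁ x₂ = 0)
    (hx₁ : herm F m x₁ x₁ = -1) (hx₂ : herm F m x₂ x₂ = -1)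
    (s t : Fin k → Rq F m)
    (hs : ∀ i, s i = - herm F m (r i) x₁) (ht : ∀ i, t i = - herm F m (r i) x₂) :
    IsHermSelfDual F m
      (Submodule.span (Rq F m)
        (({Fin.append ![1, 0, 0, 0] x₁, Fin.append ![0, 1, 0, 0] x₂} :
            Set (Fin (4 + 2 * ℓ) → Rq F m)) ∪
          Set.range fun i =>
            Fin.append ![s i, t i, α * s i + β * t i, β * s i - α * t i] (r i))) := by
  classical
  set e₁ : Fin (4 + 2 * ℓ) → Rq F m := Fin.append ![1, 0, 0, 0] x₁ with he₁
  set e₂ : Fin (4 + 2 * ℓ) → Rq F m := Fin.append ![0, 1, 0, 0] x₂ with he₂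
  set g : Fin k → (Fin (4 + 2 * ℓ) → Rq F m) := fun i =>
    Fin.append ![s i, t i, α * s i + β * t i, β * s i - α * t i] (r i) with hgdef
  set G : Set (Fin (4 + 2 * ℓ) → Rq F m) := {e₁, e₂} ∪ Set.range g with hGdef
  set C : Submodule (Rq F m) (Fin (4 + 2 * ℓ) → Rq F m) := Submodule.span (Rq F m) G with hC
  -- basic facts
  have hr_mem : ∀ i, r i ∈ C₀ := fun i => hC₀span ▸ Submodule.subset_span ⟨i, rfl⟩
  have hC₀orth : ∀ x ∈ C₀, ∀ y ∈ C₀, herm F m x y = 0 := fun x hx y hy => (hC₀sd y).mp hy x hx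
  have hrx₁ : ∀ i, herm F m (r i) x₁ = - s i := fun i => by rw [hs i, neg_neg]
  have hrx₂ : ∀ i, herm F m (r i) x₂ = - t i := fun i => by rw [ht i, neg_neg]
  have hx₁r : ∀ i, herm F m x₁ (r i) = - conjR F m (s i) := fun i => by
    rw [← conj_herm hm, hrx₁, map_neg]
  have hx₂r : ∀ i, herm F m x₂ (r i) = - conjR F m (t i) := fun i => by
    rw [← conj_herm hm, hrx₂, map_neg]
  have hx₂₁ : herm F m x₂ x₁ = 0 := by rw [← conj_herm hm, hx₁₂, map_zero]
  have he₁G : e₁ ∈ G := Set.mem_union_left _ (Set.mem_insert _ _)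
  have he₂G : e₂ ∈ G := Set.mem_union_left _ (Set.mem_insert_of_mem _ rfl)
  have hgG : ∀ i, g i ∈ G := fun i => Set.mem_union_right _ ⟨i, rfl⟩
  -- pairwise orthogonality of generators
  have hpair : ∀ x ∈ G, ∀ y ∈ G, herm F m x y = 0 := by
    intro x hx y hy
    simp only [hGdef, Set.mem_union, Set.mem_insert_iff, Set.mem_singleton_iff,
      Set.mem_range] at hx hy
    rcases hx with (rfl | rfl) | ⟨i, rfl⟩ <;> rcases hy with (rfl | rfl) | ⟨j, rfl⟩
    · rw [he₁, herm_append, herm_vec4, hx₁]; simp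
    · rw [he₁, he₂, herm_append, herm_vec4, hx₁₂]; simp
    · rw [he₁, hgdef, herm_append, herm_vec4, hx₁r j]
      simp [Matrix.cons_val_zero]
    · rw [he₁, he₂, herm_append, herm_vec4, hx₂₁]; simp
    · rw [he₂, herm_append, herm_vec4, hx₂]; simp
    · rw [he₂, hgdef, herm_append, herm_vec4, hx₂r j]
      simp [Matrix.cons_val_one]
    · rw [he₁, hgdef, herm_append, herm_vec4, hrx₁ i]; simp
    · rw [he₂, hgdef, herm_append, herm_vec4, hrx₂ i]; simp
    · rw [hgdef, herm_append, herm_vec4, hC₀orth _ (hr_mem i) _ (hr_mem j)]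
      simp only [Matrix.cons_val_zero, Matrix.cons_val_one, Matrix.head_cons,
        Matrix.cons_val_two, Matrix.tail_cons, Matrix.cons_val_three, map_add, map_mul,
        map_sub, add_zero]
      linear_combination (s i * conjR F m (s j) + t i * conjR F m (t j)) * hαβ +
        (s i * conjR F m (t j) - t i * conjR F m (s j)) * hαβ'
  intro v
  constructor
  · -- v ∈ C → orthogonal to everything in C
    intro hv x hx
    have horth : ∀ x' ∈ G, herm F m x' v = 0 := by
      intro x' hx'
      have hsub : C ≤ dualSM x' :=
        Submodule.span_le.mpr (fun y hy => mem_dualSM.mpr (hpair x' hx' y hy))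
      exact mem_dualSM.mp (hsub hv)
    have hker : C ≤ LinearMap.ker (hermL v) :=
      Submodule.span_le.mpr (fun x' hx' => LinearMap.mem_ker.mpr (horth x' hx'))
    exact LinearMap.mem_ker.mp (hker hx)
  · -- orthogonal to everything in C → v ∈ C
    intro H
    have hvG : ∀ x' ∈ G, herm F m x' v = 0 := fun x' hx' => H x' (Submodule.subset_span hx')
    set vh : Fin 4 → Rq F m := fun j => v (Fin.castAdd (2 * ℓ) j) with hvh
    set w : Fin (2 * ℓ) → Rq F m := fun j => v (Fin.natAdd 4 j) with hwdef
    have hE1 : conjR F m (vh 0) + herm F m x₁ w = 0 := by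
      have h := hvG e₁ he₁G
      rw [he₁, herm_append_left, herm_vec4] at h
      have h' : 1 * conjR F m (vh 0) + 0 * conjR F m (vh 1) + 0 * conjR F m (vh 2) +
          0 * conjR F m (vh 3) + herm F m x₁ w = 0 := h
      linear_combination h'
    have hE2 : conjR F m (vh 1) + herm F m x₂ w = 0 := by
      have h := hvG e₂ he₂G
      rw [he₂, herm_append_left, herm_vec4] at h
      have h' : 0 * conjR F m (vh 0) + 1 * conjR F m (vh 1) + 0 * conjR F m (vh 2) +
          0 * conjR F m (vh 3) + herm F m x₂ w = 0 := h
      linear_combination h'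
    have hGi : ∀ i, s i * conjR F m (vh 0) + t i * conjR F m (vh 1) +
        (α * s i + β * t i) * conjR F m (vh 2) +
        (β * s i - α * t i) * conjR F m (vh 3) + herm F m (r i) w = 0 := by
      intro i
      have h := hvG (g i) (hgG i)
      simp only [hgdef] at h
      rw [herm_append_left, herm_vec4] at h
      have h' : s i * conjR F m (vh 0) + t i * conjR F m (vh 1) +
          (α * s i + β * t i) * conjR F m (vh 2) +
          (β * s i - α * t i) * conjR F m (vh 3) + herm F m (r i) w = 0 := h
      linear_combination h'
    set A : Rq F m := conjR F m (conjR F m (vh 0) + α * conjR F m (vh 2) +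
      β * conjR F m (vh 3)) with hA
    set B : Rq F m := conjR F m (conjR F m (vh 1) + β * conjR F m (vh 2) -
      α * conjR F m (vh 3)) with hB
    set ww : Fin (2 * ℓ) → Rq F m := w - A • x₁ - B • x₂ with hww
    have hwwq : ∀ x ∈ C₀, herm F m x ww = 0 := by
      intro x hx
      rw [hC₀span] at hx
      induction hx using Submodule.span_induction with
      | mem x hx =>
        obtain ⟨i, rfl⟩ := hx
        rw [hww, herm_sub_right, herm_sub_right, herm_smul_right, herm_smul_right,
          hA, hB, conjR_conjR hm, conjR_conjR hm, hrx₁ i, hrx₂ i]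
        linear_combination hGi i
      | zero => exact herm_zero_left ww
      | add x y hx hy ihx ihy => rw [herm_add_left, ihx, ihy, add_zero]
      | smul z x hx ih => rw [herm_smul_left, ih, mul_zero]
    have hwwC₀ : ww ∈ C₀ := (hC₀sd ww).mpr hwwq
    obtain ⟨cv, hcv⟩ := (Submodule.mem_span_range_iff_exists_fun (Rq F m)).mp
      (by rwa [hC₀span] at hwwC₀)
    have hwws : herm F m ww x₁ = - ∑ i, cv i * s i := by
      rw [← hcv, herm_sum_left]
      simp only [hrx₁, mul_neg]
      exact Finset.sum_neg_distrib _
    have hwwt : herm F m ww x₂ = - ∑ i, cv i * t i := by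
      rw [← hcv, herm_sum_left]
      simp only [hrx₂, mul_neg]
      exact Finset.sum_neg_distrib _
    have hwrep : w = ww + A • x₁ + B • x₂ := by rw [hww]; abel
    have hx₁w : herm F m x₁ w = - conjR F m (∑ i, cv i * s i) - conjR F m A := by
      conv_lhs => rw [hwrep]
      rw [herm_add_right, herm_add_right, herm_smul_right, herm_smul_right, hx₁, hx₁₂,
        ← conj_herm hm ww x₁, hwws, map_neg]
      ring
    have hx₂w : herm F m x₂ w = - conjR F m (∑ i, cv i * t i) - conjR F m B := by
      conv_lhs => rw [hwrep]
      rw [herm_add_right, herm_add_right, herm_smul_right, herm_smul_right, hx₂, hx₂₁,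
        ← conj_herm hm ww x₂, hwwt, map_neg]
      ring
    have hsA : conjR F m A = conjR F m (vh 0) + α * conjR F m (vh 2) +
        β * conjR F m (vh 3) := by rw [hA, conjR_conjR hm]
    have hsB : conjR F m B = conjR F m (vh 1) + β * conjR F m (vh 2) -
        α * conjR F m (vh 3) := by rw [hB, conjR_conjR hm]
    have ha : vh 0 = (∑ i, cv i * s i) + A := by
      have h3 : conjR F m (vh 0) = conjR F m ((∑ i, cv i * s i) + A) := by
        rw [map_add]; linear_combination hE1 - hx₁w
      calc vh 0 = conjR F m (conjR F m (vh 0)) := (conjR_conjR hm _).symm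
        _ = conjR F m (conjR F m ((∑ i, cv i * s i) + A)) := by rw [h3]
        _ = (∑ i, cv i * s i) + A := conjR_conjR hm _
    have hb : vh 1 = (∑ i, cv i * t i) + B := by
      have h3 : conjR F m (vh 1) = conjR F m ((∑ i, cv i * t i) + B) := by
        rw [map_add]; linear_combination hE2 - hx₂w
      calc vh 1 = conjR F m (conjR F m (vh 1)) := (conjR_conjR hm _).symm
        _ = conjR F m (conjR F m ((∑ i, cv i * t i) + B)) := by rw [h3]
        _ = (∑ i, cv i * t i) + B := conjR_conjR hm _
    have hSc : conjR F m (∑ i, cv i * s i) =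
        -(α * conjR F m (vh 2) + β * conjR F m (vh 3)) := by
      linear_combination hx₁w - hE1 - hsA
    have hTc : conjR F m (∑ i, cv i * t i) =
        -(β * conjR F m (vh 2) - α * conjR F m (vh 3)) := by
      linear_combination hx₂w - hE2 - hsB
    have hS : (∑ i, cv i * s i) = -(conjR F m α * vh 2 + conjR F m β * vh 3) := by
      have h4 := congrArg (conjR F m) hSc
      rwa [conjR_conjR hm, map_neg, map_add, map_mul, map_mul, conjR_conjR hm,
        conjR_conjR hm] at h4
    have hT : (∑ i, cv i * t i) = -(conjR F m β * vh 2 - conjR F m α * vh 3) := by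
      have h4 := congrArg (conjR F m) hTc
      rwa [conjR_conjR hm, map_neg, map_sub, map_mul, map_mul, conjR_conjR hm,
        conjR_conjR hm] at h4
    have hsum2 : ∑ i, cv i * (α * s i + β * t i) =
        α * (∑ i, cv i * s i) + β * (∑ i, cv i * t i) := by
      rw [Finset.mul_sum, Finset.mul_sum, ← Finset.sum_add_distrib]
      exact Finset.sum_congr rfl fun i _ => by ring
    have hsum3 : ∑ i, cv i * (β * s i - α * t i) =
        β * (∑ i, cv i * s i) - α * (∑ i, cv i * t i) := by
      rw [Finset.mul_sum, Finset.mul_sum, ← Finset.sum_sub_distrib]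
      exact Finset.sum_congr rfl fun i _ => by ring
    have hhead : A • ![(1 : Rq F m), 0, 0, 0] + B • ![0, 1, 0, 0] +
        ∑ i, cv i • ![s i, t i, α * s i + β * t i, β * s i - α * t i] = vh := by
      funext j
      fin_cases j <;>
        simp only [Pi.add_apply, Pi.smul_apply, smul_eq_mul, Finset.sum_apply,
          Matrix.cons_val_zero, Matrix.cons_val_one, Matrix.head_cons,
          Matrix.cons_val_two, Matrix.tail_cons, Matrix.cons_val_three, Fin.isValue]
      · show A * 1 + B * 0 + ∑ i, cv i * s i = vh 0
        linear_combination -ha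
      · show A * 0 + B * 1 + ∑ i, cv i * t i = vh 1
        linear_combination -hb
      · show A * 0 + B * 0 + ∑ i, cv i * (α * s i + β * t i) = vh 2
        rw [hsum2, hS, hT]
        linear_combination (-(vh 2)) * hαβ + (-(vh 3)) * hαβ'
      · show A * 0 + B * 0 + ∑ i, cv i * (β * s i - α * t i) = vh 3
        rw [hsum3, hS, hT]
        linear_combination (-(vh 3)) * hαβ + (vh 2) * hαβ'
    have htail : A • x₁ + B • x₂ + ∑ i, cv i • r i = w := by
      rw [hcv, hww]; abel
    have hv_app : Fin.append vh w = v := by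
      rw [hvh, hwdef]; exact Fin.append_castAdd_natAdd
    have hrep : A • e₁ + B • e₂ + (∑ i, cv i • g i) = v := by
      rw [he₁, he₂, hgdef, smul_append, smul_append]
      rw [show (∑ i, cv i • Fin.append ![s i, t i, α * s i + β * t i, β * s i - α * t i] (r i))
          = Fin.append (∑ i, cv i • ![s i, t i, α * s i + β * t i, β * s i - α * t i])
              (∑ i, cv i • r i) by
        rw [← sum_append]
        exact Finset.sum_congr rfl fun i _ => smul_append _ _ _]
      rw [append_add, append_add, ← hv_app, hhead, htail]
    rw [← hrep]
    exact Submodule.add_mem _ (Submodule.add_mem _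
      (Submodule.smul_mem _ _ (Submodule.subset_span he₁G))
      (Submodule.smul_mem _ _ (Submodule.subset_span he₂G)))
      (Submodule.sum_mem _ fun i _ => Submodule.smul_mem _ _ (Submodule.subset_span (hgG i)))
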